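/- The functional F(A) = (1 + log|A|²)·det A − |A|² on 2×2 real matrices (restricted to matrices with |A| > 0) is rank-one concave: for any matrix A and any rank-one matrix X, the function t ↦ F(A + tX) is concave on any interval where A + tX ≠ 0. -/

import Mathlib

set_option maxHeartbeats 1000000

/-- The operator norm of a 2×2 real matrix, acting on Euclidean space. -/
noncomputable def opNorm (A : Matrix (Fin 2) (Fin 2) ℝ) : ℝ :=
  ‖LinearMap.toContinuousLinearMap (Matrix.toEuclideanLin A)‖

/-- The functional `F(A) = (1 + log|A|²)·det A − |A|²`. -/
noncomputable def Ffun (A : Matrix (Fin 2) (Fin 2) ℝ) : ℝ :=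
  (1 + Real.log (opNorm A ^ 2)) * A.det - opNorm A ^ 2

noncomputable def zC (M : Matrix (Fin 2) (Fin 2) ℝ) : ℂ :=
  ⟨(M 0 0 + M 1 1)/2, (M 1 0 - M 0 1)/2⟩

noncomputable def wC (M : Matrix (Fin 2) (Fin 2) ℝ) : ℂ :=
  ⟨(M 0 0 - M 1 1)/2, (M 1 0 + M 0 1)/2⟩

lemma zw_mulVec (M : Matrix (Fin 2) (Fin 2) ℝ) (x y : ℝ) :
    zC M * ⟨x, y⟩ + wC M * (starRingEnd ℂ) ⟨x, y⟩ =
      ⟨M 0 0 * x + M 0 1 * y, M 1 0 * x + M 1 1 * y⟩ := by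
  apply Complex.ext <;>
    simp [zC, wC, Complex.mul_re, Complex.mul_im] <;> ring

lemma det_eq (M : Matrix (Fin 2) (Fin 2) ℝ) :
    M.det = Complex.normSq (zC M) - Complex.normSq (wC M) := by
  rw [Matrix.det_fin_two]
  simp [zC, wC, Complex.normSq_mk]
  ring

lemma norm_apply (M : Matrix (Fin 2) (Fin 2) ℝ) (v : EuclideanSpace ℝ (Fin 2)) :
    ‖(LinearMap.toContinuousLinearMap (Matrix.toEuclideanLin M)) v‖
      = ‖zC M * ⟨v 0, v 1⟩ + wC M * (starRingEnd ℂ) ⟨v 0, v 1⟩‖ := by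
  rw [zw_mulVec, Complex.norm_def, Complex.normSq_mk]
  have h : (LinearMap.toContinuousLinearMap (Matrix.toEuclideanLin M)) v
      = Matrix.toEuclideanLin M v := rfl
  rw [h, Matrix.toEuclideanLin_apply, EuclideanSpace.norm_eq]
  congr 1
  rw [Fin.sum_univ_two]
  simp [Matrix.mulVec, dotProduct, Fin.sum_univ_two, Real.norm_eq_abs, _root_.sq_abs]
  ring

lemma norm_vec (v : EuclideanSpace ℝ (Fin 2)) : ‖v‖ = ‖(⟨v 0, v 1⟩ : ℂ)‖ := by
  rw [EuclideanSpace.norm_eq, Fin.sum_univ_two, Complex.norm_def, Complex.normSq_mk]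
  simp [Real.norm_eq_abs, _root_.sq_abs]
  ring_nf

lemma exists_align (z w : ℂ) :
    ∃ c : ℂ, ‖c‖ = 1 ∧ (z * (starRingEnd ℂ) w * c^2).re = ‖z‖ * ‖w‖ := by
  by_cases hd : z * (starRingEnd ℂ) w = 0
  · refine ⟨1, by simp, ?_⟩
    have : ‖z‖ * ‖w‖ = 0 := by
      have := congrArg (‖·‖) hd
      simpa [map_mul] using this
    simp [hd, this]
  · set d := z * (starRingEnd ℂ) w with hdd
    obtain ⟨c, hc⟩ := IsAlgClosed.exists_pow_nat_eq ((starRingEnd ℂ) d / (‖d‖ : ℂ)) (n := 2) (by norm_num)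
    have habsd : (0:ℝ) < ‖d‖ := by
      have := norm_pos_iff.mpr hd
      simpa using this
    have hcabs : ‖c‖ = 1 := by
      have h2 : ‖c‖ ^ 2 = 1 := by
        rw [← norm_pow, hc, norm_div]
        simp [Complex.norm_conj, habsd.ne']
      nlinarith [norm_nonneg c]
    refine ⟨c, hcabs, ?_⟩
    rw [hc]
    have key : d * ((starRingEnd ℂ) d / (‖d‖ : ℂ)) = ((‖d‖ : ℝ) : ℂ) := by
      have h1 : d * (starRingEnd ℂ) d = ((‖d‖ ^ 2 : ℝ) : ℂ) := by
        rw [Complex.mul_conj, Complex.sq_norm]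
      rw [mul_div_assoc'] at *
      rw [h1]
      push_cast
      rw [pow_two, mul_div_assoc]
      rw [div_self (by exact_mod_cast habsd.ne' : ((‖d‖ : ℝ) : ℂ) ≠ 0), mul_one]
    rw [key]
    have : ‖d‖ = ‖z‖ * ‖w‖ := by
      rw [hdd, norm_mul, Complex.norm_conj]
    simp [this]

lemma opNorm_eq (M : Matrix (Fin 2) (Fin 2) ℝ) :
    opNorm M = ‖zC M‖ + ‖wC M‖ := by
  unfold opNorm
  apply le_antisymm
  · apply ContinuousLinearMap.opNorm_le_bound _ (by positivity)
    intro v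
    rw [norm_apply, norm_vec]
    calc ‖zC M * ⟨v 0, v 1⟩ + wC M * (starRingEnd ℂ) ⟨v 0, v 1⟩‖
        ≤ ‖zC M * ⟨v 0, v 1⟩‖ + ‖wC M * (starRingEnd ℂ) ⟨v 0, v 1⟩‖ :=
          norm_add_le _ _
      _ = (‖zC M‖ + ‖wC M‖) * ‖(⟨v 0, v 1⟩ : ℂ)‖ := by
          rw [norm_mul, norm_mul, Complex.norm_conj]; ring
  · obtain ⟨c, hc1, hc2⟩ := exists_align (zC M) (wC M)
    set v : EuclideanSpace ℝ (Fin 2) := (WithLp.equiv 2 (Fin 2 → ℝ)).symm ![c.re, c.im] with hv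
    have hv0 : v 0 = c.re := rfl
    have hv1 : v 1 = c.im := rfl
    have hvc : (⟨v 0, v 1⟩ : ℂ) = c := by rw [hv0, hv1]
    have hnv : ‖v‖ = 1 := by rw [norm_vec, hvc, hc1]
    have h1 := (LinearMap.toContinuousLinearMap (Matrix.toEuclideanLin M)).le_opNorm v
    rw [norm_apply, hvc, hnv, mul_one] at h1
    refine le_trans (le_of_eq ?_) h1
    -- abs z + abs w = abs (z*c + w*conj c)
    have hsq : ‖zC M * c + wC M * (starRingEnd ℂ) c‖ ^ 2
        = (‖zC M‖ + ‖wC M‖) ^ 2 := by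
      rw [Complex.sq_norm, Complex.normSq_add]
      have he : zC M * c * (starRingEnd ℂ) (wC M * (starRingEnd ℂ) c)
          = zC M * (starRingEnd ℂ) (wC M) * c ^ 2 := by
        simp [map_mul]
        ring
      rw [he, hc2]
      have h1 : Complex.normSq (zC M * c) = Complex.normSq (zC M) := by
        rw [Complex.normSq_mul]
        have : Complex.normSq c = 1 := by
          rw [← Complex.sq_norm, hc1]; norm_num
        rw [this, mul_one]
      have h2 : Complex.normSq (wC M * (starRingEnd ℂ) c) = Complex.normSq (wC M) := by
        rw [Complex.normSq_mul, Complex.normSq_conj]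
        have : Complex.normSq c = 1 := by
          rw [← Complex.sq_norm, hc1]; norm_num
        rw [this, mul_one]
      rw [h1, h2, ← Complex.sq_norm, ← Complex.sq_norm]
      ring
    have hnn1 : (0:ℝ) ≤ ‖zC M‖ + ‖wC M‖ := by positivity
    have hnn2 : (0:ℝ) ≤ ‖zC M * c + wC M * (starRingEnd ℂ) c‖ := norm_nonneg _
    nlinarith [hsq]

noncomputable def NN (u v : ℝ → ℝ) (t : ℝ) : ℝ := Real.sqrt (u t) + Real.sqrt (v t)

noncomputable def NN1 (u v du dv : ℝ → ℝ) (t : ℝ) : ℝ :=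
  du t/(2*Real.sqrt (u t)) + dv t/(2*Real.sqrt (v t))

noncomputable def NN2 (u v du dv : ℝ → ℝ) (r2 : ℝ) (t : ℝ) : ℝ :=
  (2*r2*(2*Real.sqrt (u t)) - du t*(2*(du t/(2*Real.sqrt (u t)))))/(2*Real.sqrt (u t))^2
  + (2*r2*(2*Real.sqrt (v t)) - dv t*(2*(dv t/(2*Real.sqrt (v t)))))/(2*Real.sqrt (v t))^2

noncomputable def Gfun (u v du dv : ℝ → ℝ) (t : ℝ) : ℝ :=
  (2*NN u v t*NN1 u v du dv t/(NN u v t^2)) * (u t - v t)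
  + (1 + Real.log (NN u v t^2)) * (du t - dv t) - 2*NN u v t*NN1 u v du dv t

noncomputable def Hfun (u v du dv : ℝ → ℝ) (r2 : ℝ) (t : ℝ) : ℝ :=
  ((2*NN1 u v du dv t*NN1 u v du dv t + 2*NN u v t*NN2 u v du dv r2 t)*NN u v t^2
      - 2*NN u v t*NN1 u v du dv t*(2*NN u v t*NN1 u v du dv t))/(NN u v t^2)^2 * (u t - v t)
  + 4*NN u v t*NN1 u v du dv t*(du t - dv t)/(NN u v t^2)
  - 2*NN1 u v du dv t*NN1 u v du dv t - 2*NN u v t*NN2 u v du dv r2 t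

lemma abstract_concave (u v du dv : ℝ → ℝ) (r2 : ℝ)
    (hu' : ∀ t, HasDerivAt u (du t) t) (hdu' : ∀ t, HasDerivAt du (2*r2) t)
    (hv' : ∀ t, HasDerivAt v (dv t) t) (hdv' : ∀ t, HasDerivAt dv (2*r2) t)
    (hupos : ∀ t, 0 < u t) (hvpos : ∀ t, 0 < v t)
    (hdu2 : ∀ t, du t^2 ≤ 4*r2*u t) (hdv2 : ∀ t, dv t^2 ≤ 4*r2*v t) :
    ConcaveOn ℝ Set.univ (fun t =>
      (1 + Real.log ((Real.sqrt (u t) + Real.sqrt (v t))^2)) * (u t - v t)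
      - (Real.sqrt (u t) + Real.sqrt (v t))^2) := by
  have hsu : ∀ t, 0 < Real.sqrt (u t) := fun t => Real.sqrt_pos.mpr (hupos t)
  have hsv : ∀ t, 0 < Real.sqrt (v t) := fun t => Real.sqrt_pos.mpr (hvpos t)
  have hNpos : ∀ t, 0 < NN u v t := fun t => add_pos (hsu t) (hsv t)
  have hNsqne : ∀ t, NN u v t ^ 2 ≠ 0 := fun t => pow_ne_zero _ (hNpos t).ne'
  have h1 : ∀ t, HasDerivAt (fun t => Real.sqrt (u t)) (du t/(2*Real.sqrt (u t))) t :=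
    fun t => (hu' t).sqrt (hupos t).ne'
  have h2 : ∀ t, HasDerivAt (fun t => Real.sqrt (v t)) (dv t/(2*Real.sqrt (v t))) t :=
    fun t => (hv' t).sqrt (hvpos t).ne'
  have hNd : ∀ t, HasDerivAt (NN u v) (NN1 u v du dv t) t := fun t => (h1 t).add (h2 t)
  have hNsqd : ∀ t, HasDerivAt (fun t => NN u v t^2) (2*NN u v t*NN1 u v du dv t) t := by
    intro t
    have := (hNd t).pow 2
    refine this.congr_deriv ?_
    push_cast; ring
  have hlogd : ∀ t, HasDerivAt (fun t => Real.log (NN u v t^2))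
      (2*NN u v t*NN1 u v du dv t/(NN u v t^2)) t := fun t => (hNsqd t).log (hNsqne t)
  have hLd : ∀ t, HasDerivAt (fun t => u t - v t) (du t - dv t) t := fun t => (hu' t).sub (hv' t)
  have hfd : ∀ t, HasDerivAt (fun t =>
      (1 + Real.log ((Real.sqrt (u t) + Real.sqrt (v t))^2)) * (u t - v t)
      - (Real.sqrt (u t) + Real.sqrt (v t))^2) (Gfun u v du dv t) t := by
    intro t
    have := (((hlogd t).const_add 1).mul (hLd t)).sub (hNsqd t)
    refine this.congr_deriv ?_
    all_goals unfold Gfun; ring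
  have hP1d : ∀ t, HasDerivAt (fun t => du t/(2*Real.sqrt (u t)))
      ((2*r2*(2*Real.sqrt (u t)) - du t*(2*(du t/(2*Real.sqrt (u t)))))/(2*Real.sqrt (u t))^2) t :=
    fun t => (hdu' t).div ((h1 t).const_mul 2) (by have := hsu t; positivity)
  have hQ1d : ∀ t, HasDerivAt (fun t => dv t/(2*Real.sqrt (v t)))
      ((2*r2*(2*Real.sqrt (v t)) - dv t*(2*(dv t/(2*Real.sqrt (v t)))))/(2*Real.sqrt (v t))^2) t :=
    fun t => (hdv' t).div ((h2 t).const_mul 2) (by have := hsv t; positivity)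
  have hN1d : ∀ t, HasDerivAt (NN1 u v du dv) (NN2 u v du dv r2 t) t :=
    fun t => (hP1d t).add (hQ1d t)
  have hnumd : ∀ t, HasDerivAt (fun t => 2*NN u v t*NN1 u v du dv t)
      (2*NN1 u v du dv t*NN1 u v du dv t + 2*NN u v t*NN2 u v du dv r2 t) t := by
    intro t
    have := ((hNd t).const_mul 2).mul (hN1d t)
    refine this.congr_deriv ?_
    all_goals ring
  have hRd : ∀ t, HasDerivAt (fun t => 2*NN u v t*NN1 u v du dv t/(NN u v t^2))
      (((2*NN1 u v du dv t*NN1 u v du dv t + 2*NN u v t*NN2 u v du dv r2 t)*NN u v t^2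
        - 2*NN u v t*NN1 u v du dv t*(2*NN u v t*NN1 u v du dv t))/(NN u v t^2)^2) t :=
    fun t => (hnumd t).div (hNsqd t) (hNsqne t)
  have hGd : ∀ t, HasDerivAt (Gfun u v du dv) (Hfun u v du dv r2 t) t := by
    intro t
    have := (((hRd t).mul (hLd t)).add
      (((hlogd t).const_add 1).mul ((hdu' t).sub (hdv' t)))).sub (hnumd t)
    refine this.congr_deriv ?_
    all_goals unfold Hfun; simp only [Pi.sub_apply]; ring
  have hH : ∀ t, Hfun u v du dv r2 t ≤ 0 := by
    intro t
    have hput : u t = Real.sqrt (u t)^2 := (Real.sq_sqrt (hupos t).le).symm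
    have hqvt : v t = Real.sqrt (v t)^2 := (Real.sq_sqrt (hvpos t).le).symm
    unfold Hfun NN NN1 NN2
    set p := Real.sqrt (u t) with hp
    set q := Real.sqrt (v t) with hq
    have hpp : 0 < p := hsu t
    have hqq : 0 < q := hsv t
    set d1 := du t with hd1
    set d2 := dv t with hd2
    have hx1 : d1^2 ≤ 4*r2*p^2 := by rw [hd1, hp, ← hput]; exact hdu2 t
    have hx2 : d2^2 ≤ 4*r2*q^2 := by rw [hd2, hq, ← hqvt]; exact hdv2 t
    set A := d1/(2*p) with hA
    set B := d2/(2*q) with hB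
    have hd1A : d1 = 2*p*A := by rw [hA]; field_simp
    have hd2B : d2 = 2*q*B := by rw [hB]; field_simp
    have hA2 : A^2 ≤ r2 := by
      rw [hA, div_pow]
      rw [div_le_iff₀ (by positivity)]
      calc d1^2 ≤ 4*r2*p^2 := hx1
        _ = r2*(2*p)^2 := by ring
    rw [hput, hqvt, hd1A, hd2B]
    have hnsum : (0:ℝ) < p + q := by linarith
    refine le_trans (le_of_eq (?_ :
        _ = -(4*(p+q)*((r2 - A^2)/p) + 4*q*(A+B)^2/(p+q)))) ?_
    · field_simp
      ring
    · have hX : 0 ≤ 4*(p+q)*((r2 - A^2)/p) := by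
        apply mul_nonneg (by positivity)
        apply div_nonneg (by linarith) (by positivity)
      have hY : 0 ≤ 4*q*(A+B)^2/(p+q) := by positivity
      linarith
  refine concaveOn_of_hasDerivWithinAt2_nonpos (f' := Gfun u v du dv) (f'' := Hfun u v du dv r2)
    convex_univ ?_ ?_ ?_ ?_
  · exact fun x _ => (hfd x).continuousAt.continuousWithinAt
  · exact fun x _ => (hfd x).hasDerivWithinAt
  · exact fun x _ => (hGd x).hasDerivWithinAt
  · exact fun x _ => hH x

lemma quad_deriv (a b r : ℝ) (t : ℝ) :
    HasDerivAt (fun t : ℝ => a + b*t + r*t^2) (b + 2*r*t) t := by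
  have h2 := (hasDerivAt_pow 2 t).const_mul r
  have h3 := ((hasDerivAt_id t).const_mul b).const_add a
  have := h3.add h2
  refine this.congr_deriv ?_
  push_cast
  ring

lemma oneD (r2 au bu av bv : ℝ) (hr2 : 0 < r2) (hu : bu^2 ≤ 4*r2*au) (hv : bv^2 ≤ 4*r2*av)
    (S : Set ℝ) (hS : Convex ℝ S)
    (hpos : ∀ t ∈ S, 0 < (au+bu*t+r2*t^2) + (av+bv*t+r2*t^2)) :
    ConcaveOn ℝ S (fun t =>
      (1 + Real.log ((Real.sqrt (au+bu*t+r2*t^2) + Real.sqrt (av+bv*t+r2*t^2))^2))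
        * ((au+bu*t+r2*t^2) - (av+bv*t+r2*t^2))
      - (Real.sqrt (au+bu*t+r2*t^2) + Real.sqrt (av+bv*t+r2*t^2))^2) := by
  set g : ℝ → ℝ → ℝ := fun ε t =>
    (1 + Real.log ((Real.sqrt (au+bu*t+r2*t^2+ε) + Real.sqrt (av+bv*t+r2*t^2+ε))^2))
      * ((au+bu*t+r2*t^2) - (av+bv*t+r2*t^2))
    - (Real.sqrt (au+bu*t+r2*t^2+ε) + Real.sqrt (av+bv*t+r2*t^2+ε))^2 with hg
  have hfam : ∀ ε : ℝ, 0 < ε → ConcaveOn ℝ Set.univ (g ε) := by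
    intro ε hε
    have hu' : ∀ t, HasDerivAt (fun t : ℝ => au+bu*t+r2*t^2+ε) (bu+2*r2*t) t :=
      fun t => (quad_deriv au bu r2 t).add_const ε
    have hv' : ∀ t, HasDerivAt (fun t : ℝ => av+bv*t+r2*t^2+ε) (bv+2*r2*t) t :=
      fun t => (quad_deriv av bv r2 t).add_const ε
    have hdu' : ∀ t, HasDerivAt (fun t : ℝ => bu+2*r2*t) (2*r2) t := by
      intro t
      simpa using ((hasDerivAt_id t).const_mul (2*r2)).const_add bu
    have hdv' : ∀ t, HasDerivAt (fun t : ℝ => bv+2*r2*t) (2*r2) t := by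
      intro t
      simpa using ((hasDerivAt_id t).const_mul (2*r2)).const_add bv
    have hup : ∀ t : ℝ, 0 < au+bu*t+r2*t^2+ε := by
      intro t
      nlinarith [sq_nonneg (bu+2*r2*t), mul_pos hr2 hε]
    have hvp : ∀ t : ℝ, 0 < av+bv*t+r2*t^2+ε := by
      intro t
      nlinarith [sq_nonneg (bv+2*r2*t), mul_pos hr2 hε]
    have hdu2 : ∀ t : ℝ, (bu+2*r2*t)^2 ≤ 4*r2*(au+bu*t+r2*t^2+ε) := by
      intro t
      nlinarith [mul_pos hr2 hε]
    have hdv2 : ∀ t : ℝ, (bv+2*r2*t)^2 ≤ 4*r2*(av+bv*t+r2*t^2+ε) := by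
      intro t
      nlinarith [mul_pos hr2 hε]
    have h := abstract_concave _ _ _ _ r2 hu' hdu' hv' hdv' hup hvp hdu2 hdv2
    have heq : (g ε) = (fun t =>
        (1 + Real.log ((Real.sqrt (au+bu*t+r2*t^2+ε) + Real.sqrt (av+bv*t+r2*t^2+ε))^2))
          * ((au+bu*t+r2*t^2+ε) - (av+bv*t+r2*t^2+ε))
        - (Real.sqrt (au+bu*t+r2*t^2+ε) + Real.sqrt (av+bv*t+r2*t^2+ε))^2) := by
      funext t
      rw [hg]
      ring
    rw [heq]
    exact h
  -- limit argument
  have htend : ∀ t ∈ S, Filter.Tendsto (fun n : ℕ => g (1/(n+1)) t) Filter.atTop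
      (nhds ((1 + Real.log ((Real.sqrt (au+bu*t+r2*t^2) + Real.sqrt (av+bv*t+r2*t^2))^2))
        * ((au+bu*t+r2*t^2) - (av+bv*t+r2*t^2))
      - (Real.sqrt (au+bu*t+r2*t^2) + Real.sqrt (av+bv*t+r2*t^2))^2)) := by
    intro t ht
    have hQ1 : (0:ℝ) ≤ au+bu*t+r2*t^2 := by nlinarith [sq_nonneg (bu+2*r2*t)]
    have hQ2 : (0:ℝ) ≤ av+bv*t+r2*t^2 := by nlinarith [sq_nonneg (bv+2*r2*t)]
    have hN0 : 0 < Real.sqrt (au+bu*t+r2*t^2) + Real.sqrt (av+bv*t+r2*t^2) := by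
      rcases lt_or_ge 0 (au+bu*t+r2*t^2) with h|h
      · have := Real.sqrt_pos.mpr h
        have := Real.sqrt_nonneg (av+bv*t+r2*t^2)
        linarith
      · have h2 : 0 < av+bv*t+r2*t^2 := by
          have := hpos t ht
          linarith
        have := Real.sqrt_pos.mpr h2
        have := Real.sqrt_nonneg (au+bu*t+r2*t^2)
        linarith
    have c1 : Continuous (fun ε : ℝ => Real.sqrt (au+bu*t+r2*t^2+ε)) :=
      Real.continuous_sqrt.comp (continuous_const.add continuous_id)
    have c2 : Continuous (fun ε : ℝ => Real.sqrt (av+bv*t+r2*t^2+ε)) :=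
      Real.continuous_sqrt.comp (continuous_const.add continuous_id)
    have tN : Filter.Tendsto (fun ε : ℝ =>
        (Real.sqrt (au+bu*t+r2*t^2+ε) + Real.sqrt (av+bv*t+r2*t^2+ε))^2) (nhds 0)
        (nhds ((Real.sqrt (au+bu*t+r2*t^2) + Real.sqrt (av+bv*t+r2*t^2))^2)) := by
      have := ((c1.add c2).pow 2).continuousAt (x := (0:ℝ))
      unfold ContinuousAt at this
      simpa [Pi.add_def, Pi.pow_def] using this
    have tlog : Filter.Tendsto (fun ε : ℝ =>
        Real.log ((Real.sqrt (au+bu*t+r2*t^2+ε) + Real.sqrt (av+bv*t+r2*t^2+ε))^2)) (nhds 0)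
        (nhds (Real.log ((Real.sqrt (au+bu*t+r2*t^2) + Real.sqrt (av+bv*t+r2*t^2))^2))) :=
      (Real.continuousAt_log (by positivity)).tendsto.comp tN
    have tfin : Filter.Tendsto (fun ε : ℝ =>
        (1 + Real.log ((Real.sqrt (au+bu*t+r2*t^2+ε) + Real.sqrt (av+bv*t+r2*t^2+ε))^2))
          * ((au+bu*t+r2*t^2) - (av+bv*t+r2*t^2))
        - (Real.sqrt (au+bu*t+r2*t^2+ε) + Real.sqrt (av+bv*t+r2*t^2+ε))^2) (nhds 0)
        (nhds ((1 + Real.log ((Real.sqrt (au+bu*t+r2*t^2) + Real.sqrt (av+bv*t+r2*t^2))^2))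
          * ((au+bu*t+r2*t^2) - (av+bv*t+r2*t^2))
        - (Real.sqrt (au+bu*t+r2*t^2) + Real.sqrt (av+bv*t+r2*t^2))^2)) :=
      ((tendsto_const_nhds.add tlog).mul tendsto_const_nhds).sub tN
    have hseq : Filter.Tendsto (fun n : ℕ => (1:ℝ)/(n+1)) Filter.atTop (nhds 0) :=
      tendsto_one_div_add_atTop_nhds_zero_nat
    have := tfin.comp hseq
    simpa [Function.comp_def, hg] using this
  refine ⟨hS, ?_⟩
  intro x hx y hy a b ha hb hab
  have key : ∀ n : ℕ, a • g (1/(n+1)) x + b • g (1/(n+1)) y ≤ g (1/(n+1)) (a • x + b • y) :=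
    fun n => (hfam (1/(n+1)) (by positivity)).2 (Set.mem_univ x) (Set.mem_univ y) ha hb hab
  have hxy : a • x + b • y ∈ S := hS hx hy ha hb hab
  have t1 := (((htend x hx).const_smul a).add ((htend y hy).const_smul b))
  have t2 := htend (a • x + b • y) hxy
  exact le_of_tendsto_of_tendsto' t1 t2 key

lemma normSq_zC_line (A X : Matrix (Fin 2) (Fin 2) ℝ) (t : ℝ) :
    Complex.normSq (zC (A + t • X)) = Complex.normSq (zC A)
      + (2*((zC A).re*(zC X).re + (zC A).im*(zC X).im))*t + Complex.normSq (zC X)*t^2 := by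
  simp [zC, Complex.normSq_mk, Matrix.add_apply, Matrix.smul_apply, smul_eq_mul]
  ring

lemma normSq_wC_line (A X : Matrix (Fin 2) (Fin 2) ℝ) (t : ℝ) :
    Complex.normSq (wC (A + t • X)) = Complex.normSq (wC A)
      + (2*((wC A).re*(wC X).re + (wC A).im*(wC X).im))*t + Complex.normSq (wC X)*t^2 := by
  simp [wC, Complex.normSq_mk, Matrix.add_apply, Matrix.smul_apply, smul_eq_mul]
  ring

lemma zero_of_zw (M : Matrix (Fin 2) (Fin 2) ℝ) (h1 : zC M = 0) (h2 : wC M = 0) : M = 0 := by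
  rw [Complex.ext_iff] at h1 h2
  simp [zC, wC] at h1 h2
  ext i j
  fin_cases i <;> fin_cases j <;> simp <;> linarith [h1.1, h1.2, h2.1, h2.2]

lemma sum_normSq_pos (M : Matrix (Fin 2) (Fin 2) ℝ) (hM : M ≠ 0) :
    0 < Complex.normSq (zC M) + Complex.normSq (wC M) := by
  rcases (lt_or_eq_of_le (add_nonneg (Complex.normSq_nonneg (zC M)) (Complex.normSq_nonneg (wC M)))).symm with h|h
  · exact h.symm ▸ (by
      exfalso
      apply hM
      have h1 : Complex.normSq (zC M) = 0 := by nlinarith [Complex.normSq_nonneg (zC M), Complex.normSq_nonneg (wC M)]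
      have h2 : Complex.normSq (wC M) = 0 := by nlinarith [Complex.normSq_nonneg (zC M), Complex.normSq_nonneg (wC M)]
      exact zero_of_zw M (Complex.normSq_eq_zero.mp h1) (Complex.normSq_eq_zero.mp h2))
  · exact h

theorem Ffun_rank_one_concave
    (A X : Matrix (Fin 2) (Fin 2) ℝ) (hX : X.rank = 1)
    (S : Set ℝ) (hS : Convex ℝ S) (hne : ∀ t ∈ S, A + t • X ≠ 0) :
    ConcaveOn ℝ S (fun t => Ffun (A + t • X)) := by
  have hX0 : X ≠ 0 := by
    intro h
    rw [h, Matrix.rank_zero] at hX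
    exact one_ne_zero hX.symm
  have hdet : X.det = 0 := by
    by_contra h
    have hunit : IsUnit X := (Matrix.isUnit_iff_isUnit_det X).mpr (isUnit_iff_ne_zero.mpr h)
    have := Matrix.rank_of_isUnit X hunit
    rw [hX] at this
    simp at this
  have hzw : Complex.normSq (wC X) = Complex.normSq (zC X) := by
    have := det_eq X
    rw [hdet] at this
    linarith
  set r2 := Complex.normSq (zC X) with hr2def
  have hr2 : 0 < r2 := by
    have hsum := sum_normSq_pos X hX0
    rw [hzw] at hsum
    rw [hr2def]
    linarith
  set au := Complex.normSq (zC A) with hau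
  set av := Complex.normSq (wC A) with hav
  set bu := 2*((zC A).re*(zC X).re + (zC A).im*(zC X).im) with hbu
  set bv := 2*((wC A).re*(wC X).re + (wC A).im*(wC X).im) with hbv
  have hul : ∀ t : ℝ, Complex.normSq (zC (A + t • X)) = au+bu*t+r2*t^2 := by
    intro t
    rw [normSq_zC_line]
  have hvl : ∀ t : ℝ, Complex.normSq (wC (A + t • X)) = av+bv*t+r2*t^2 := by
    intro t
    rw [normSq_wC_line, hzw]
  have hcs1 : bu^2 ≤ 4*r2*au := by
    rw [hbu, hr2def, hau, Complex.normSq_apply, Complex.normSq_apply]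
    nlinarith [sq_nonneg ((zC A).re*(zC X).im - (zC A).im*(zC X).re)]
  have hcs2 : bv^2 ≤ 4*r2*av := by
    rw [hbv, hav, ← hzw, Complex.normSq_apply, Complex.normSq_apply]
    nlinarith [sq_nonneg ((wC A).re*(wC X).im - (wC A).im*(wC X).re)]
  have hpos : ∀ t ∈ S, 0 < (au+bu*t+r2*t^2) + (av+bv*t+r2*t^2) := by
    intro t ht
    rw [← hul t, ← hvl t]
    exact sum_normSq_pos _ (hne t ht)
  have hFf : (fun t => Ffun (A + t • X)) = (fun t =>
      (1 + Real.log ((Real.sqrt (au+bu*t+r2*t^2) + Real.sqrt (av+bv*t+r2*t^2))^2))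
        * ((au+bu*t+r2*t^2) - (av+bv*t+r2*t^2))
      - (Real.sqrt (au+bu*t+r2*t^2) + Real.sqrt (av+bv*t+r2*t^2))^2) := by
    funext t
    rw [Ffun, opNorm_eq, det_eq, Complex.norm_def, Complex.norm_def, hul t, hvl t]
  rw [hFf]
  exact oneD r2 au bu av bv hr2 hcs1 hcs2 S hS hpos
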